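/- Let η be a substitution and u ∈ A^ℤ a two-sided periodic point of η with growing seed u_{-1}|u_0 and period p. For every n ∈ ℤ \ {−1, 0}, if q is the u-quotient and r the u-remainder of n, then u_n = η^p(u_q)[r] (the r-th letter of η^p(u_q)) and rep_u(n) = rep_u(q) ⊙ tail_{η,p,u_q}(r). -/

import Mathlib

open Filter List

variable {A : Type*}

/-- A substitution applied to a word: concatenation of the images of its letters. -/
def substW (η : A → List A) (w : List A) : List A := (w.map η).flatten

/-- The `k`-th iterate of a substitution applied to a word. -/
def iterW (η : A → List A) (k : ℕ) (w : List A) : List A := (substW η)^[k] w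

/-- `η` is a substitution: nonempty images and at least one growing letter. -/
def IsSubstitution (η : A → List A) : Prop :=
  (∀ c, η c ≠ []) ∧ ∃ a, Tendsto (fun k => (iterW η k [a]).length) atTop atTop

/-- `(m i, a i)` for `i = 0, …, len-1` is an `x`-admissible sequence:
`m (i) ++ [a i]` is a prefix of `η (a (i+1))` and `m (len-1) ++ [a (len-1)]`
is a prefix of `η x`. -/
def AdmSeq (η : A → List A) (len : ℕ) (m : ℕ → List A) (a : ℕ → A) (x : A) : Prop :=
  (∀ i, i + 1 < len → (m i ++ [a i]) <+: η (a (i + 1))) ∧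
  (1 ≤ len → (m (len - 1) ++ [a (len - 1)]) <+: η x)

/-- `Σ_{j<k} |η^j(m_j)|`. -/
def sumLen (η : A → List A) (k : ℕ) (m : ℕ → List A) : ℕ :=
  ∑ j ∈ Finset.range k, (iterW η j (m j)).length

/-- `η^{k-1}(m_{k-1}) η^{k-2}(m_{k-2}) ⋯ η^0(m_0)`. -/
def concatDT (η : A → List A) (k : ℕ) (m : ℕ → List A) : List A :=
  ((List.range k).reverse.map (fun j => iterW η j (m j))).flatten

/-- The digit word `|m_{k-1}| ⊙ |m_{k-2}| ⊙ ⋯ ⊙ |m_0|`. -/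
def dtDigits (k : ℕ) (m : ℕ → List A) : List ℕ :=
  (List.range k).reverse.map (fun j => (m j).length)

/-- Partial run of the automaton `A_{η,x}`: from state `x`, the digit `d`
moves to the `d`-th letter of `η x` when `d < |η x|`. -/
def run (η : A → List A) : List ℕ → A → Option A
  | [], x => some x
  | d :: w, x => if h : d < (η x).length then run η w ((η x)[d]) else none

/-- `u` restricted to nonnegative positions is a periodic point of `η` of period `p`:
every `η^p`-image of a prefix of `u` is again a prefix of `u`. -/
def RightPer (η : A → List A) (p : ℕ) (u : ℤ → A) : Prop :=
  ∀ n : ℕ, ∀ j : ℕ, j < (iterW η p (List.ofFn (fun i : Fin (n+1) => u i))).length →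
    (iterW η p (List.ofFn (fun i : Fin (n+1) => u i)))[j]? = some (u j)

/-- `u` restricted to negative positions is a periodic point of `η` of period `p`:
every `η^p`-image of a suffix `u_{-(n+1)} ⋯ u_{-1}` of the left part is again a
suffix of the left part of `u`. -/
def LeftPer (η : A → List A) (p : ℕ) (u : ℤ → A) : Prop :=
  ∀ n : ℕ, ∀ j : ℕ,
    j < (iterW η p (List.ofFn (fun i : Fin (n+1) => u ((i : ℤ) - (n+1))))).length →
    (iterW η p (List.ofFn (fun i : Fin (n+1) => u ((i : ℤ) - (n+1)))))[j]? =
      some (u ((j : ℤ) -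
        (iterW η p (List.ofFn (fun i : Fin (n+1) => u ((i : ℤ) - (n+1))))).length))

/-- `u : ℤ → A` is a two-sided periodic point of `η` of period `p ≥ 1` with
growing seed `u₋₁ | u₀`. -/
def TwoSidedPerPoint (η : A → List A) (p : ℕ) (u : ℤ → A) : Prop :=
  1 ≤ p ∧ RightPer η p u ∧ LeftPer η p u ∧
  Tendsto (fun k => (iterW η k [u 0]).length) atTop atTop ∧
  Tendsto (fun k => (iterW η k [u (-1)]).length) atTop atTop

/-- The Dumont–Thomas decomposition data of a positive integer `n` with respect to
the letter `x` (Theorem of Dumont–Thomas for the right-infinite part):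
`p ∣ k`, `p ≤ k`, the sequence is `x`-admissible, `m_{k-1} ⋯ m_{k-p} ≠ ε` and
`Σ_{j<k} |η^j(m_j)| = n`. -/
def PosSpec (η : A → List A) (p : ℕ) (x : A) (n : ℤ) (k : ℕ) (m : ℕ → List A)
    (a : ℕ → A) : Prop :=
  p ∣ k ∧ p ≤ k ∧ AdmSeq η k m a x ∧ (∃ i, i < p ∧ m (k - 1 - i) ≠ []) ∧
  (sumLen η k m : ℤ) = n

/-- The Dumont–Thomas decomposition data of an integer `n ≤ -2` with respect to
the letter `b` (Theorem of Dumont–Thomas for the left-infinite part). -/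
def NegSpec (η : A → List A) (p : ℕ) (b : A) (n : ℤ) (k : ℕ) (m : ℕ → List A)
    (a : ℕ → A) : Prop :=
  p ∣ k ∧ p ≤ k ∧ AdmSeq η k m a b ∧
  ((List.range p).map (fun i => iterW η (p - 1 - i) (m (k - 1 - i)))).flatten
      ++ [a (k - p)] ≠ iterW η p [b] ∧
  (sumLen η k m : ℤ) = n + (iterW η k [b]).length

/-- `w` is the Dumont–Thomas complement representation `rep_u(n)` of `n ∈ ℤ`. -/
def RepSpec (η : A → List A) (p : ℕ) (u : ℤ → A) (n : ℤ) (w : List ℕ) : Prop :=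
  (n = 0 ∧ w = [0]) ∨ (n = -1 ∧ w = [1]) ∨
  (1 ≤ n ∧ ∃ k m a, PosSpec η p (u 0) n k m a ∧ w = 0 :: dtDigits k m) ∨
  (n ≤ -2 ∧ ∃ k m a, NegSpec η p (u (-1)) n k m a ∧ w = 1 :: dtDigits k m)

/-- Run of the automaton `A_{η,s}` with initial state `start`: the first digit
`0` (resp. `1`) moves to `u 0` (resp. `u (-1)`). -/
def runSeed (η : A → List A) (u : ℤ → A) : List ℕ → Option A
  | [] => none
  | d :: w => if d = 0 then run η w (u 0) else if d = 1 then run η w (u (-1)) else none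

/-- `|η^{k-p-1}(m_{k-1}) ⋯ η^0(m_p)|`, the `u`-quotient of a positive integer. -/
def uQuotPos (η : A → List A) (p k : ℕ) (m : ℕ → List A) : ℤ :=
  ∑ j ∈ Finset.range (k - p), ((iterW η j (m (j + p))).length : ℤ)

/-- `w = tail_{η,p,x}(n)`: the digit word of the unique `x`-admissible sequence of
length `p` whose length-sum is `n`. -/
def TailSpec (η : A → List A) (p : ℕ) (x : A) (n : ℕ) (w : List ℕ) : Prop :=
  ∃ m a, AdmSeq η p m a x ∧ sumLen η p m = n ∧ w = dtDigits p m

/-- Radix order: shorter words first, ties broken lexicographically. -/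
def radLt (v w : List ℕ) : Prop :=
  v.length < w.length ∨ (v.length = w.length ∧ List.Lex (· < ·) v w)

/-- Reversed-radix order: longer words first, ties broken lexicographically. -/
def revLt (v w : List ℕ) : Prop :=
  w.length < v.length ∨ (v.length = w.length ∧ List.Lex (· < ·) v w)

/-- The total order `≺` on `{0,1}D*`. -/
def precLt (v w : List ℕ) : Prop :=
  (v.head? = some 1 ∧ w.head? = some 0) ∨
  (v.head? = some 0 ∧ w.head? = some 0 ∧ radLt v w) ∨
  (v.head? = some 1 ∧ w.head? = some 1 ∧ revLt v w)

/-- The base-2 value `Σ_{i<k} w_i 2^i` of the word `w = w_{k-1} ⋯ w_0`. -/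
def natVal2 (w : List ℕ) : ℕ := w.foldl (fun acc d => 2 * acc + d) 0

/-- The two's complement value `Σ_{i<k} w_i 2^i − w_{k-1} 2^k`. -/
def val2c (w : List ℕ) : ℤ := (natVal2 w : ℤ) - (w.headI : ℤ) * 2 ^ w.length

/-- Fibonacci numbers with `F 0 = 1`, `F 1 = 2`. -/
def fib2 : ℕ → ℕ
  | 0 => 1
  | 1 => 2
  | n + 2 => fib2 (n + 1) + fib2 n

/-- The Fibonacci complement value `Σ_{i<k} w_i F_i − w_{k-1} F_k`
of the word `w = w_{k-1} ⋯ w_0`. -/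
def valFc (w : List ℕ) : ℤ :=
  (∑ i ∈ Finset.range w.length, (w.reverse.getD i 0 : ℤ) * fib2 i) -
    (w.headI : ℤ) * fib2 w.length

section Aux

lemma substW_append (η : A → List A) (v w : List A) :
    substW η (v ++ w) = substW η v ++ substW η w := by
  simp [substW]

lemma iterW_append (η : A → List A) (k : ℕ) (v w : List A) :
    iterW η k (v ++ w) = iterW η k v ++ iterW η k w := by
  induction k generalizing v w with
  | zero => rfl
  | succ k ih => simp only [iterW, Function.iterate_succ_apply, substW_append]; exact ih _ _

lemma iterW_nil (η : A → List A) (k : ℕ) : iterW η k ([] : List A) = [] := by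
  induction k with
  | zero => rfl
  | succ k ih => simp only [iterW, Function.iterate_succ_apply]; simpa [substW, iterW] using ih

lemma iterW_add (η : A → List A) (j k : ℕ) (w : List A) :
    iterW η (j + k) w = iterW η j (iterW η k w) := by
  simp [iterW, Function.iterate_add_apply]

lemma iterW_singleton_succ (η : A → List A) (k : ℕ) (x : A) :
    iterW η (k + 1) [x] = iterW η k (η x) := by
  have : substW η [x] = η x := by simp [substW]
  simp only [iterW, Function.iterate_succ_apply, this]

lemma iterW_ne_nil {η : A → List A} (hη : ∀ c, η c ≠ []) (k : ℕ) {w : List A}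
    (hw : w ≠ []) : iterW η k w ≠ [] := by
  induction k generalizing w with
  | zero => exact hw
  | succ k ih =>
    simp only [iterW, Function.iterate_succ_apply]
    have hs : substW η w ≠ [] := by
      cases w with
      | nil => exact absurd rfl hw
      | cons c t =>
        simp only [substW, map_cons, flatten_cons]
        intro h
        rcases List.append_eq_nil_iff.mp h with ⟨h1, _⟩
        exact hη c h1
    exact ih hs

lemma prefix_iterW (η : A → List A) (k : ℕ) {v w : List A} (h : v <+: w) :
    iterW η k v <+: iterW η k w := by
  obtain ⟨t, rfl⟩ := h
  rw [iterW_append]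
  exact prefix_append _ _

lemma concatDT_succ (η : A → List A) (k : ℕ) (m : ℕ → List A) :
    concatDT η (k + 1) m = iterW η k (m k) ++ concatDT η k m := by
  simp [concatDT, List.range_succ]

lemma length_concatDT (η : A → List A) (k : ℕ) (m : ℕ → List A) :
    (concatDT η k m).length = sumLen η k m := by
  induction k with
  | zero => rfl
  | succ k ih =>
    rw [concatDT_succ, length_append, ih]
    simp [sumLen, Finset.sum_range_succ]
    ring

lemma length_iterW_concatDT (η : A → List A) (p k : ℕ) (m : ℕ → List A) :
    (iterW η p (concatDT η k m)).length = ∑ j ∈ Finset.range k, (iterW η (p + j) (m j)).length := by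
  induction k with
  | zero => simp [concatDT, iterW_nil]
  | succ k ih =>
    rw [concatDT_succ, iterW_append, length_append, ih, Finset.sum_range_succ, ← iterW_add]
    ring

lemma dt_prefix (η : A → List A) {k : ℕ} (hk : 1 ≤ k) {m : ℕ → List A} {a : ℕ → A} {x : A}
    (h : AdmSeq η k m a x) : concatDT η k m ++ [a 0] <+: iterW η k [x] := by
  obtain ⟨k, rfl⟩ := Nat.exists_eq_add_of_le hk
  clear hk
  induction k generalizing x with
  | zero =>
    have h2 := h.2 (by omega)
    have hc : concatDT η 1 m = m 0 := by
      rw [show (1:ℕ) = 0 + 1 from rfl, concatDT_succ]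
      simp [concatDT, iterW]
    have hi : iterW η 1 [x] = η x := by
      rw [show (1:ℕ) = 0 + 1 from rfl, iterW_singleton_succ]; rfl
    rw [hc, hi]
    simpa using h2
  | succ k ih =>
    have hadm : AdmSeq η (1 + k) m a (a (k + 1)) := by
      refine ⟨fun i hi => h.1 i (by omega), fun _ => ?_⟩
      have := h.1 k (by omega)
      simpa [Nat.add_comm 1 k] using this
    have hpre := ih hadm
    have h2 : m (k + 1) ++ [a (k + 1)] <+: η x := by
      have := h.2 (by omega)
      simpa [show 1 + (k+1) - 1 = k + 1 by omega] using this
    have h3 : iterW η (1 + k) (m (k + 1) ++ [a (k + 1)]) <+: iterW η (1 + k) (η x) := 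
      prefix_iterW η _ h2
    rw [iterW_append] at h3
    have h4 : iterW η (1 + k) (η x) = iterW η (1 + (k + 1)) [x] := by
      rw [show 1 + (k + 1) = (1 + k) + 1 by omega, iterW_singleton_succ]
    rw [h4] at h3
    have h5 : concatDT η (1 + (k + 1)) m ++ [a 0]
        = iterW η (1 + k) (m (k + 1)) ++ (concatDT η (1 + k) m ++ [a 0]) := by
      rw [show 1 + (k + 1) = (1 + k) + 1 by omega, concatDT_succ]
      simp [Nat.add_comm 1 k]
    rw [h5]
    calc iterW η (1 + k) (m (k + 1)) ++ (concatDT η (1 + k) m ++ [a 0])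
        <+: iterW η (1 + k) (m (k + 1)) ++ iterW η (1 + k) [a (k + 1)] := by
          exact (prefix_append_right_inj _).2 hpre
      _ <+: iterW η (1 + (k + 1)) [x] := h3

lemma getElem?_of_prefix {v w : List A} (h : v <+: w) {j : ℕ} (hj : j < v.length) :
    w[j]? = v[j]? := by
  obtain ⟨t, rfl⟩ := h
  exact List.getElem?_append_left hj

lemma eq_of_pointwise {v w : List A} (f : ℕ → A) (hlen : v.length = w.length)
    (hv : ∀ j, j < v.length → v[j]? = some (f j)) (hw : ∀ j, j < w.length → w[j]? = some (f j)) :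
    v = w := by
  refine List.ext_getElem? (fun i => ?_)
  by_cases hi : i < v.length
  · rw [hv i hi, hw i (hlen ▸ hi)]
  · rw [List.getElem?_eq_none (by omega), List.getElem?_eq_none (by omega)]

lemma reverse_range_map {B : Type*} (p : ℕ) (f : ℕ → B) :
    (List.range p).reverse.map f = (List.range p).map (fun i => f (p - 1 - i)) := by
  apply List.ext_getElem (by simp)
  intro i h1 h2
  simp [List.getElem_reverse, List.getElem_range]

lemma getElem?_append_offset (v t : List A) (j : ℕ) :
    (v ++ t)[v.length + j]? = t[j]? := by
  rw [List.getElem?_append_right (by omega)]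
  congr 1
  omega

lemma sumLen_pos_of (η : A → List A) {p : ℕ} {m : ℕ → List A}
    (h : 1 ≤ sumLen η p m) : ∃ i, i < p ∧ m (p - 1 - i) ≠ [] := by
  by_contra hc
  push_neg at hc
  have hall : ∀ j, j < p → m j = [] := by
    intro j hj
    have := hc (p - 1 - j) (by omega)
    rwa [show p - 1 - (p - 1 - j) = j by omega] at this
  have : sumLen η p m = 0 := by
    apply Finset.sum_eq_zero
    intro j hj
    rw [hall j (Finset.mem_range.mp hj), iterW_nil]
    rfl
  omega

lemma right_prefix {η : A → List A} (hη : ∀ c, η c ≠ []) {p : ℕ} {u : ℤ → A}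
    (hr : RightPer η p u) (t : ℕ) :
    ∀ j, j < (iterW η (p * t) [u 0]).length →
      (iterW η (p * t) [u 0])[j]? = some (u j) := by
  induction t with
  | zero =>
    intro j hj
    simp only [Nat.mul_zero] at *
    have : j = 0 := by simpa [iterW] using hj
    subst this
    simp [iterW]
  | succ t ih =>
    set w := iterW η (p * t) [u 0] with hw
    have hne : w ≠ [] := iterW_ne_nil hη _ (by simp)
    have hlen : 1 ≤ w.length := List.length_pos_iff.2 hne
    have hofn : w = List.ofFn (fun i : Fin (w.length - 1 + 1) => u i) := by
      apply eq_of_pointwise (fun j => u j)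
      · simp; omega
      · exact ih
      · intro j hj
        have hj' : j < w.length - 1 + 1 := by
          simp at hj; omega
        rw [List.getElem?_eq_getElem (by simpa using hj')]
        congr 1
        rw [List.getElem_ofFn]
    intro j hj
    have hiter : iterW η (p * (t + 1)) [u 0] = iterW η p w := by
      rw [hw, ← iterW_add]
      congr 1
      ring
    rw [hiter] at hj ⊢
    have := hr (w.length - 1) j
    rw [← hofn] at this
    exact this hj

lemma left_suffix {η : A → List A} (hη : ∀ c, η c ≠ []) {p : ℕ} {u : ℤ → A}
    (hl : LeftPer η p u) (t : ℕ) :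
    ∀ j, j < (iterW η (p * t) [u (-1)]).length →
      (iterW η (p * t) [u (-1)])[j]? =
        some (u ((j : ℤ) - (iterW η (p * t) [u (-1)]).length)) := by
  induction t with
  | zero =>
    intro j hj
    simp only [Nat.mul_zero] at *
    have hj0 : j = 0 := by simpa [iterW] using hj
    subst hj0
    simp [iterW]
  | succ t ih =>
    set w := iterW η (p * t) [u (-1)] with hw
    have hne : w ≠ [] := iterW_ne_nil hη _ (by simp)
    have hlen : 1 ≤ w.length := List.length_pos_iff.2 hne
    set n := w.length - 1 with hn
    have hofn : w = List.ofFn (fun i : Fin (n+1) => u ((i : ℤ) - (n+1))) := by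
      apply eq_of_pointwise (fun j => u ((j : ℤ) - w.length))
      · simp; omega
      · exact ih
      · intro j hj
        have hj' : j < n + 1 := by simp at hj; omega
        rw [List.getElem?_eq_getElem (by simpa using hj')]
        congr 1
        rw [List.getElem_ofFn]
        congr 1
        push_cast
        omega
    intro j hj
    have hiter : iterW η (p * (t + 1)) [u (-1)] = iterW η p w := by
      rw [hw, ← iterW_add]
      congr 1
      ring
    rw [hiter] at hj ⊢
    have := hl n j
    rw [← hofn] at this
    exact this hj

lemma adm_shift {η : A → List A} {k p : ℕ} {m : ℕ → List A} {a : ℕ → A} {x : A}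
    (h : AdmSeq η k m a x) (hk : p < k) :
    AdmSeq η (k - p) (fun j => m (j + p)) (fun j => a (j + p)) x := by
  constructor
  · intro i hi
    have := h.1 (i + p) (by omega)
    rwa [show i + p + 1 = i + 1 + p by omega] at this
  · intro _
    have := h.2 (by omega)
    rwa [show k - 1 = k - p - 1 + p by omega] at this

lemma adm_letter {η : A → List A} {k : ℕ} (hk : 1 ≤ k) {m : ℕ → List A} {a : ℕ → A} {x : A}
    (h : AdmSeq η k m a x) :
    (iterW η k [x])[sumLen η k m]? = some (a 0) := by
  have hpre := dt_prefix η hk h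
  have hj : sumLen η k m < (concatDT η k m ++ [a 0]).length := by
    rw [length_append, length_concatDT]; simp
  rw [getElem?_of_prefix hpre hj, ← length_concatDT η k m, List.getElem?_concat_length]

lemma sumLen_lt {η : A → List A} {k : ℕ} (hk : 1 ≤ k) {m : ℕ → List A} {a : ℕ → A} {x : A}
    (h : AdmSeq η k m a x) : sumLen η k m < (iterW η k [x]).length := by
  have hpre := dt_prefix η hk h
  have := hpre.length_le
  rw [length_append, length_concatDT] at this
  simpa using this

lemma dtDigits_add (p k' : ℕ) (m m' : ℕ → List A) :
    dtDigits (p + k') (fun j => if j < p then m j else m' (j - p)) =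
      dtDigits k' m' ++ dtDigits p m := by
  unfold dtDigits
  rw [reverse_range_map, reverse_range_map, reverse_range_map,
    show p + k' = k' + p by omega, List.range_add, List.map_append, List.map_map]
  congr 1
  · apply List.map_congr_left
    intro i hi
    simp only [List.mem_range] at hi
    have h1 : ¬ (k' + p - 1 - i < p) := by omega
    simp only [h1, if_false]
    have h2 : k' + p - 1 - i - p = k' - 1 - i := by omega
    rw [h2]
  · apply List.map_congr_left
    intro i hi
    simp only [List.mem_range] at hi
    simp only [Function.comp_apply]
    have h2 : k' + p - 1 - (k' + i) = p - 1 - i := by omega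
    have h1 : p - 1 - i < p := by omega
    rw [h2]
    simp only [h1, if_true]

lemma sumLen_add (η : A → List A) (p k' : ℕ) (m m' : ℕ → List A) :
    sumLen η (p + k') (fun j => if j < p then m j else m' (j - p)) =
      sumLen η p m + ∑ j ∈ Finset.range k', (iterW η (p + j) (m' j)).length := by
  unfold sumLen
  rw [Finset.sum_range_add]
  congr 1
  · apply Finset.sum_congr rfl
    intro i hi
    simp only [Finset.mem_range] at hi
    simp only [hi, if_true]
  · apply Finset.sum_congr rfl
    intro i hi
    have h1 : ¬ (p + i < p) := by omega
    have h2 : p + i - p = i := by omega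
    simp only [h1, if_false, h2]

lemma adm_combine {η : A → List A} {p k' : ℕ} (hp : 1 ≤ p) (hk' : 1 ≤ k')
    {m m' : ℕ → List A} {a a' : ℕ → A} {y x : A}
    (h1 : AdmSeq η p m a y) (h2 : AdmSeq η k' m' a' x) (hy : y = a' 0) :
    AdmSeq η (p + k') (fun j => if j < p then m j else m' (j - p))
      (fun j => if j < p then a j else a' (j - p)) x := by
  constructor
  · intro i hi
    by_cases h : i + 1 < p
    · have hi1 : i < p := by omega
      simp only [hi1, h, if_true]
      exact h1.1 i (by omega)
    · by_cases h' : i < p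
      · have hip : i = p - 1 := by omega
        have h3 : i + 1 - p = 0 := by omega
        simp only [h', h, if_true, if_false, h3]
        have := h1.2 hp
        rw [hy] at this
        rwa [hip]
      · have h4 : i + 1 - p = (i - p) + 1 := by omega
        simp only [h', h, if_false, h4]
        exact h2.1 (i - p) (by omega)
  · intro _
    have h1' : ¬ (p + k' - 1 < p) := by omega
    have h2' : p + k' - 1 - p = k' - 1 := by omega
    simp only [h1', if_false, h2']
    exact h2.2 hk'


end Aux

/-- Lemma on quotient and remainder. For `n ∈ ℤ \ {-1,0}`
with `u`-quotient `q` and `u`-remainder `r`, one has `u_n = η^p(u_q)[r]` and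
`rep_u(n) = rep_u(q) ⊙ tail_{η,p,u_q}(r)`. -/
theorem rep_recurrence [Finite A] (η : A → List A) (hη : IsSubstitution η)
    (p : ℕ) (u : ℤ → A) (hu : TwoSidedPerPoint η p u) (n : ℤ) :
    (∀ (k : ℕ) (m : ℕ → List A) (a : ℕ → A), 1 ≤ n →
      PosSpec η p (u 0) n k m a →
      (iterW η p [u (uQuotPos η p k m)])[sumLen η p m]? = some (u n) ∧
      ∀ wq : List ℕ, RepSpec η p u (uQuotPos η p k m) wq →
        RepSpec η p u n (wq ++ dtDigits p m)) ∧
    (∀ (k : ℕ) (m : ℕ → List A) (a : ℕ → A), n ≤ -2 →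
      NegSpec η p (u (-1)) n k m a →
      (iterW η p [u (uQuotPos η p k m - (iterW η (k - p) [u (-1)]).length)])[sumLen η p m]?
          = some (u n) ∧
      ∀ wq : List ℕ,
        RepSpec η p u (uQuotPos η p k m - (iterW η (k - p) [u (-1)]).length) wq →
        RepSpec η p u n (wq ++ dtDigits p m)) := by
  obtain ⟨hp, hR, hL, _, _⟩ := hu
  have hη1 := hη.1
  have hpref : ∀ K, p ∣ K → ∀ j, j < (iterW η K [u 0]).length →
      (iterW η K [u 0])[j]? = some (u j) := by
    rintro K ⟨t, rfl⟩
    exact right_prefix hη1 hR t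
  have hsuf : ∀ K, p ∣ K → ∀ j, j < (iterW η K [u (-1)]).length →
      (iterW η K [u (-1)])[j]? = some (u ((j : ℤ) - (iterW η K [u (-1)]).length)) := by
    rintro K ⟨t, rfl⟩
    exact left_suffix hη1 hL t
  constructor
  · -- positive part
    rintro k m a hn ⟨hdvd, hpk, hadm, hnem, hsum⟩
    obtain ⟨d, rfl⟩ : ∃ d, k = p + d := ⟨k - p, by omega⟩
    have hddvd : p ∣ d := (Nat.dvd_add_right (dvd_refl p)).mp hdvd
    have hk1 : 1 ≤ p + d := by omega
    set Qn := ∑ j ∈ Finset.range d, (iterW η j (m (j + p))).length with hQn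
    have hquot : uQuotPos η p (p + d) m = (Qn : ℤ) := by
      rw [uQuotPos, show p + d - p = d by omega, hQn, Nat.cast_sum]
    have hsl : sumLen η d (fun j => m (j + p)) = Qn := rfl
    -- u n = a 0
    have hun : u n = a 0 := by
      have h1 := hpref (p + d) hdvd (sumLen η (p + d) m) (sumLen_lt hk1 hadm)
      have h2 := adm_letter hk1 hadm
      rw [h1] at h2
      have h3 := Option.some.inj h2
      rw [← hsum]
      exact h3
    -- AdmSeq of length p with respect to u Qn
    have hadmp : AdmSeq η p m a (u (Qn : ℤ)) := by
      rcases Nat.eq_zero_or_pos d with hd0 | hd0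
      · subst hd0
        have : Qn = 0 := by simp [hQn]
        rw [this]
        simpa using hadm
      · have hadms : AdmSeq η d (fun j => m (j + p)) (fun j => a (j + p)) (u 0) := by
          have := adm_shift hadm (show p < p + d by omega)
          rwa [show p + d - p = d by omega] at this
        have huq : u (Qn : ℤ) = a (0 + p) := by
          have h1 := adm_letter hd0 hadms
          have h2 := hpref d hddvd (sumLen η d fun j => m (j + p))
            (sumLen_lt hd0 hadms)
          rw [h1] at h2
          rw [hsl] at h2
          exact (Option.some.inj h2).symm
        refine ⟨fun i hi => hadm.1 i (by omega), fun _ => ?_⟩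
        rw [huq, show 0 + p = p - 1 + 1 by omega]
        exact hadm.1 (p - 1) (by omega)
    -- pointwise description of the shifted concatenation
    have hClen : (concatDT η d (fun j => m (j + p))).length = Qn := length_concatDT η d _
    have hCpts : ∀ j, j < Qn → (concatDT η d (fun j => m (j + p)))[j]? = some (u j) := by
      rcases Nat.eq_zero_or_pos d with hd0 | hd0
      · intro j hj
        exfalso
        subst hd0
        simp [hQn] at hj
      · intro j hj
        have hadms : AdmSeq η d (fun j => m (j + p)) (fun j => a (j + p)) (u 0) := by
          have := adm_shift hadm (show p < p + d by omega)
          rwa [show p + d - p = d by omega] at this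
        have hpre := dt_prefix η hd0 hadms
        have hpre2 : concatDT η d (fun j => m (j + p)) <+: iterW η d [u 0] :=
          (List.prefix_append _ _).trans hpre
        rw [← getElem?_of_prefix hpre2 (by omega)]
        exact hpref d hddvd j (by
          have := hpre2.length_le
          omega)
    -- splitting the sum
    have hsplit : sumLen η (p + d) m
        = sumLen η p m + ∑ j ∈ Finset.range d, (iterW η (p + j) (m (j + p))).length := by
      unfold sumLen
      rw [Finset.sum_range_add]
      congr 1
      apply Finset.sum_congr rfl
      intro i _
      rw [show p + i = i + p by omega]
    have hS : ∑ j ∈ Finset.range d, (iterW η (p + j) (m (j + p))).length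
        = (iterW η p (concatDT η d (fun j => m (j + p)))).length :=
      (length_iterW_concatDT η p d _).symm
    constructor
    · -- first claim
      rw [hquot, hun]
      exact adm_letter hp hadmp
    · -- second claim
      intro wq hrep
      rcases hrep with ⟨hq0, hwq⟩ | ⟨hq1, hwq⟩ | ⟨hq1, k', m', a', hps, hwq⟩ | ⟨hq2, -⟩
      · -- q = 0
        rw [hquot] at hq0
        have hQ0 : Qn = 0 := by exact_mod_cast hq0
        have hC0 : concatDT η d (fun j => m (j + p)) = [] := by
          have := hClen
          rw [hQ0] at this
          exact List.length_eq_zero_iff.mp this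
        have hrn : (sumLen η p m : ℤ) = n := by
          have h1 : sumLen η (p + d) m = sumLen η p m := by
            rw [hsplit, hS, hC0, iterW_nil]
            simp
          rw [← h1]
          exact hsum
        refine Or.inr (Or.inr (Or.inl ⟨hn, p, m, a,
          ⟨dvd_refl p, le_refl p, ?_, ?_, hrn⟩, ?_⟩))
        · rw [hq0] at hadmp
          exact hadmp
        · exact sumLen_pos_of η (by omega)
        · rw [hwq]
          rfl
      · rw [hquot] at hq1
        exfalso
        omega
      · -- q ≥ 1
        rw [hquot] at hq1 hps
        obtain ⟨hdvd', hpk', hadm', hnem', hsum'⟩ := hps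
        have hk'1 : 1 ≤ k' := le_trans hp hpk'
        have hQn' : sumLen η k' m' = Qn := by exact_mod_cast hsum'
        have hpre' := dt_prefix η hk'1 hadm'
        have hpre'2 : concatDT η k' m' <+: iterW η k' [u 0] :=
          (List.prefix_append _ _).trans hpre'
        have hC'len : (concatDT η k' m').length = Qn := by
          rw [length_concatDT, hQn']
        have hC'pts : ∀ j, j < Qn → (concatDT η k' m')[j]? = some (u j) := by
          intro j hj
          rw [← getElem?_of_prefix hpre'2 (by omega)]
          exact hpref k' hdvd' j (by
            have := hpre'2.length_le
            omega)
        have hCC : concatDT η d (fun j => m (j + p)) = concatDT η k' m' :=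
          eq_of_pointwise (fun j => u j) (by omega)
            (fun j hj => hCpts j (by omega)) (fun j hj => hC'pts j (by omega))
        have hua0 : u (Qn : ℤ) = a' 0 := by
          have h1 := adm_letter hk'1 hadm'
          have h2 := hpref k' hdvd' (sumLen η k' m') (sumLen_lt hk'1 hadm')
          rw [h1, hQn'] at h2
          exact (Option.some.inj h2).symm
        have hadmK := adm_combine hp hk'1 hadmp hadm' hua0
        have hsumM : (sumLen η (p + k')
            (fun j => if j < p then m j else m' (j - p)) : ℤ) = n := by
          rw [sumLen_add]
          have h1 : ∑ j ∈ Finset.range k', (iterW η (p + j) (m' j)).length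
              = (iterW η p (concatDT η k' m')).length :=
            (length_iterW_concatDT η p k' m').symm
          rw [h1, ← hCC, ← hS]
          rw [← hsplit]
          exact hsum
        refine Or.inr (Or.inr (Or.inl ⟨hn, p + k',
          (fun j => if j < p then m j else m' (j - p)),
          (fun j => if j < p then a j else a' (j - p)),
          ⟨dvd_add (dvd_refl p) hdvd', Nat.le_add_right p k', hadmK, ?_, hsumM⟩, ?_⟩))
        · obtain ⟨i, hi, hne⟩ := hnem'
          refine ⟨i, hi, ?_⟩
          have h1 : ¬ (p + k' - 1 - i < p) := by omega
          have h2 : p + k' - 1 - i - p = k' - 1 - i := by omega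
          simp only [h1, if_false, h2]
          exact hne
        · rw [hwq, dtDigits_add]
          rfl
      · rw [hquot] at hq2
        exfalso
        omega
  · -- negative part
    rintro k m a hn2 ⟨hdvd, hpk, hadm, hfull, hsum⟩
    obtain ⟨d, rfl⟩ : ∃ d, k = p + d := ⟨k - p, by omega⟩
    rw [show p + d - p = d by omega]
    have hddvd : p ∣ d := (Nat.dvd_add_right (dvd_refl p)).mp hdvd
    have hk1 : 1 ≤ p + d := by omega
    set Qn := ∑ j ∈ Finset.range d, (iterW η j (m (j + p))).length with hQn
    have hquot : uQuotPos η p (p + d) m = (Qn : ℤ) := by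
      rw [uQuotPos, show p + d - p = d by omega, hQn, Nat.cast_sum]
    have hsl : sumLen η d (fun j => m (j + p)) = Qn := rfl
    have hNlt : sumLen η (p + d) m < (iterW η (p + d) [u (-1)]).length :=
      sumLen_lt hk1 hadm
    -- u n = a 0
    have hun : u n = a 0 := by
      have h1 := hsuf (p + d) hdvd (sumLen η (p + d) m) hNlt
      have h2 := adm_letter hk1 hadm
      rw [h1] at h2
      have h3 := Option.some.inj h2
      have h4 : ((sumLen η (p + d) m : ℤ)
          - (iterW η (p + d) [u (-1)]).length) = n := by omega
      rw [h4] at h3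
      exact h3
    have hadms : 1 ≤ d →
        AdmSeq η d (fun j => m (j + p)) (fun j => a (j + p)) (u (-1)) := by
      intro hd0
      have := adm_shift hadm (show p < p + d by omega)
      rwa [show p + d - p = d by omega] at this
    have hQlt : Qn < (iterW η d [u (-1)]).length := by
      rcases Nat.eq_zero_or_pos d with hd0 | hd0
      · subst hd0
        have h1 : Qn = 0 := by simp [hQn]
        rw [h1]
        exact Nat.one_pos
      · have := sumLen_lt hd0 (hadms hd0)
        rwa [hsl] at this
    have huq : 1 ≤ d →
        u ((Qn : ℤ) - (iterW η d [u (-1)]).length) = a (0 + p) := by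
      intro hd0
      have h1 := adm_letter hd0 (hadms hd0)
      have h2 := hsuf d hddvd (sumLen η d fun j => m (j + p))
        (sumLen_lt hd0 (hadms hd0))
      rw [h1, hsl] at h2
      exact (Option.some.inj h2).symm
    have hadmp : AdmSeq η p m a (u ((Qn : ℤ) - (iterW η d [u (-1)]).length)) := by
      rcases Nat.eq_zero_or_pos d with hd0 | hd0
      · subst hd0
        have h1 : Qn = 0 := by simp [hQn]
        have h2 : ((Qn : ℤ) - (iterW η 0 [u (-1)]).length) = -1 := by
          rw [h1]
          norm_num
          rfl
        rw [h2]
        simpa using hadm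
      · refine ⟨fun i hi => hadm.1 i (by omega), fun _ => ?_⟩
        rw [huq hd0, show 0 + p = p - 1 + 1 by omega]
        exact hadm.1 (p - 1) (by omega)
    have hClen : (concatDT η d (fun j => m (j + p))).length = Qn := length_concatDT η d _
    have hCpre : 1 ≤ d → concatDT η d (fun j => m (j + p)) <+: iterW η d [u (-1)] :=
      fun hd0 => (List.prefix_append _ _).trans (dt_prefix η hd0 (hadms hd0))
    have hsplit : sumLen η (p + d) m
        = sumLen η p m + ∑ j ∈ Finset.range d, (iterW η (p + j) (m (j + p))).length := by
      unfold sumLen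
      rw [Finset.sum_range_add]
      congr 1
      apply Finset.sum_congr rfl
      intro i _
      rw [show p + i = i + p by omega]
    have hS : ∑ j ∈ Finset.range d, (iterW η (p + j) (m (j + p))).length
        = (iterW η p (concatDT η d (fun j => m (j + p)))).length :=
      (length_iterW_concatDT η p d _).symm
    constructor
    · rw [hquot, hun]
      exact adm_letter hp hadmp
    · intro wq hrep
      rw [hquot] at hrep
      rcases hrep with ⟨hq0, hwq⟩ | ⟨hq1, hwq⟩ | ⟨hq1, -⟩ | ⟨hq2, k', m', a', hns, hwq⟩
      · exfalso
        omega
      · -- q = -1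
        have hSval : (iterW η p (concatDT η d (fun j => m (j + p)))).length
            + (iterW η p [u (-1)]).length = (iterW η (p + d) [u (-1)]).length := by
          rcases Nat.eq_zero_or_pos d with hd0 | hd0
          · subst hd0
            have h1 : concatDT η 0 (fun j => m (j + p)) = ([] : List A) := rfl
            rw [h1, iterW_nil]
            simp
          · have hfull2 : concatDT η d (fun j => m (j + p)) ++ [a (0 + p)]
                = iterW η d [u (-1)] := by
              apply List.IsPrefix.eq_of_length (dt_prefix η hd0 (hadms hd0))
              rw [List.length_append, hClen]
              simp only [List.length_singleton]
              omega
            have hap : a (0 + p) = u (-1) := by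
              rw [← huq hd0, hq1]
            have h2 : iterW η (p + d) [u (-1)] = iterW η p (iterW η d [u (-1)]) :=
              iterW_add η p d _
            rw [h2, ← hfull2, iterW_append, hap, List.length_append]
        have hrp : (sumLen η p m : ℤ) = n + (iterW η p [u (-1)]).length := by
          have h1 := hsplit
          rw [hS] at h1
          omega
        refine Or.inr (Or.inr (Or.inr ⟨hn2, p, m, a,
          ⟨dvd_refl p, le_refl p, ?_, ?_, hrp⟩, ?_⟩))
        · rw [hq1] at hadmp
          exact hadmp
        · intro h
          have h2 : ((List.range p).map
              (fun i => iterW η (p - 1 - i) (m (p - 1 - i)))).flatten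
              = concatDT η p m := by
            rw [concatDT, reverse_range_map]
          rw [h2] at h
          apply congrArg List.length at h
          rw [List.length_append, length_concatDT] at h
          simp only [List.length_singleton] at h
          have h3 := sumLen_lt hp hadmp
          rw [hq1] at h3
          have h4 : u (-1 : ℤ) = u (-1) := rfl
          omega
        · rw [hwq]
          rfl
      · exfalso
        omega
      · -- q ≤ -2
        obtain ⟨hdvd', hpk', hadm', hfull', hsum'⟩ := hns
        have hk'1 : 1 ≤ k' := le_trans hp hpk'
        have hd0 : 1 ≤ d := by
          rcases Nat.eq_zero_or_pos d with h | h
          · exfalso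
            subst h
            have h1 : Qn = 0 := by simp [hQn]
            have h2 : (iterW η 0 [u (-1)]).length = 1 := rfl
            omega
          · exact h
        have hN'lt : sumLen η k' m' < (iterW η k' [u (-1)]).length :=
          sumLen_lt hk'1 hadm'
        have hua0 : u ((Qn : ℤ) - (iterW η d [u (-1)]).length) = a' 0 := by
          have h1 := adm_letter hk'1 hadm'
          have h2 := hsuf k' hdvd' (sumLen η k' m') hN'lt
          rw [h1] at h2
          have h3 : ((sumLen η k' m' : ℤ) - (iterW η k' [u (-1)]).length)
              = (Qn : ℤ) - (iterW η d [u (-1)]).length := by omega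
          rw [h3] at h2
          exact (Option.some.inj h2).symm
        have hadmK := adm_combine hp hk'1 hadmp hadm' hua0
        -- suffix pieces
        obtain ⟨D, hD⟩ := hCpre hd0
        obtain ⟨D', hD'⟩ := (List.prefix_append _ _).trans (dt_prefix η hk'1 hadm')
        have hC'len : (concatDT η k' m').length = sumLen η k' m' := length_concatDT η k' m'
        have hDlen : D.length = (iterW η d [u (-1)]).length - Qn := by
          apply congrArg List.length at hD
          rw [List.length_append, hClen] at hD
          omega
        have hD'len : D'.length = (iterW η k' [u (-1)]).length - sumLen η k' m' := by
          apply congrArg List.length at hD'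
          rw [List.length_append, hC'len] at hD'
          omega
        have hDD : D = D' := by
          apply eq_of_pointwise (fun j => u ((j : ℤ) + ((Qn : ℤ)
            - (iterW η d [u (-1)]).length)))
          · omega
          · intro j hj
            have h1 : (concatDT η d (fun j => m (j + p)) ++ D)[(concatDT η d
                (fun j => m (j + p))).length + j]? = D[j]? :=
              getElem?_append_offset _ _ _
            rw [hD, hClen] at h1
            rw [← h1]
            rw [hsuf d hddvd (Qn + j) (by omega)]
            have h3 : ((Qn + j : ℕ) : ℤ) - ((iterW η d [u (-1)]).length : ℤ)
                = (j : ℤ) + ((Qn : ℤ) - (iterW η d [u (-1)]).length) := by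
              push_cast
              ring
            rw [h3]
          · intro j hj
            have h1 : (concatDT η k' m' ++ D')[(concatDT η k' m').length + j]? = D'[j]? :=
              getElem?_append_offset _ _ _
            rw [hD', hC'len] at h1
            rw [← h1]
            rw [hsuf k' hdvd' (sumLen η k' m' + j) (by omega)]
            have h3 : ((sumLen η k' m' + j : ℕ) : ℤ) - ((iterW η k' [u (-1)]).length : ℤ)
                = (j : ℤ) + ((Qn : ℤ) - (iterW η d [u (-1)]).length) := by
              push_cast
              omega
            rw [h3]
        have hLk : (iterW η (p + d) [u (-1)]).length
            = (iterW η p (concatDT η d (fun j => m (j + p)))).length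
              + (iterW η p D).length := by
          rw [iterW_add η p d, ← hD, iterW_append, List.length_append]
        have hLK : (iterW η (p + k') [u (-1)]).length
            = (iterW η p (concatDT η k' m')).length + (iterW η p D').length := by
          rw [iterW_add η p k', ← hD', iterW_append, List.length_append]
        have hsumM : (sumLen η (p + k')
            (fun j => if j < p then m j else m' (j - p)) : ℤ)
            = n + (iterW η (p + k') [u (-1)]).length := by
          rw [sumLen_add]
          have h1 : ∑ j ∈ Finset.range k', (iterW η (p + j) (m' j)).length
              = (iterW η p (concatDT η k' m')).length :=
            (length_iterW_concatDT η p k' m').symm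
          have h2 := hsplit
          rw [hS] at h2
          rw [hDD] at hLk
          push_cast [h1]
          omega
        refine Or.inr (Or.inr (Or.inr ⟨hn2, p + k',
          (fun j => if j < p then m j else m' (j - p)),
          (fun j => if j < p then a j else a' (j - p)),
          ⟨dvd_add (dvd_refl p) hdvd', Nat.le_add_right p k', hadmK, ?_, hsumM⟩, ?_⟩))
        · intro h
          apply hfull'
          have hmapeq : (List.range p).map (fun i => iterW η (p - 1 - i)
              ((fun j => if j < p then m j else m' (j - p)) (p + k' - 1 - i)))
              = (List.range p).map (fun i => iterW η (p - 1 - i) (m' (k' - 1 - i))) := by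
            apply List.map_congr_left
            intro i hi
            simp only [List.mem_range] at hi
            have e1 : ¬ (p + k' - 1 - i < p) := by omega
            have e2 : p + k' - 1 - i - p = k' - 1 - i := by omega
            simp only [e1, if_false, e2]
          rw [hmapeq] at h
          have hA : (fun j => if j < p then a j else a' (j - p)) (p + k' - p)
              = a' (k' - p) := by
            have e1 : p + k' - p = k' := by omega
            have e2 : ¬ (k' < p) := by omega
            simp only [e1, e2, if_false]
          rw [hA] at h
          exact h
        · rw [hwq, dtDigits_add]
          rfl
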